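/- Let G_0 be a graph whose edge set is the disjoint union of the edges of a spanning tree and a spanning 2-forest, and let X be a subset of vertices such that the induced subgraph G_0[X] has exactly 2|X| - 2 edges. Then for any pair (A, B) consisting of a spanning 2-forest A and a spanning tree B of G_0 (or vice versa) with disjoint edge sets whose union is E(G_0), both induced subgraphs A[X] and B[X] are spanning trees on the vertex set X. -/

import Mathlib

open Finset Matrix
open scoped Classical

variable {V E : Type*}

/-- Two vertices are joined by an edge of the edge set `S`. -/
def adjRel (src tgt : E → V) (S : Finset E) (u v : V) : Prop :=
  ∃ e ∈ S, (src e = u ∧ tgt e = v) ∨ (src e = v ∧ tgt e = u)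

/-- Reachability using only edges in `S`. -/
def reach (src tgt : E → V) (S : Finset E) : V → V → Prop :=
  Relation.EqvGen (adjRel src tgt S)

/-- Number of connected components of the spanning subgraph with edge set `S`. -/
noncomputable def nComp (src tgt : E → V) (S : Finset E) : ℕ :=
  Nat.card (Quotient (Relation.EqvGen.setoid (adjRel src tgt S)))

/-- A spanning tree: connected spanning subgraph with `|V| - 1` edges. -/
def IsSpanningTree (src tgt : E → V) [Fintype V] (S : Finset E) : Prop :=
  nComp src tgt S = 1 ∧ S.card + 1 = Fintype.card V

/-- A spanning 2-forest: spanning subgraph with exactly two connected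
components and `|V| - 2` edges (hence acyclic). -/
def IsSpanning2Forest (src tgt : E → V) [Fintype V] (S : Finset E) : Prop :=
  nComp src tgt S = 2 ∧ S.card + 2 = Fintype.card V

/-- The edges of `S` with both endpoints in `X` (edge set of the induced subgraph `S[X]`). -/
noncomputable def inducedEdges (src tgt : E → V) (S : Finset E) (X : Finset V) : Finset E :=
  S.filter fun e => src e ∈ X ∧ tgt e ∈ X

/-- The induced subgraph `S[X]` is a (spanning) tree on the vertex set `X`. -/
def IsTreeOn (src tgt : E → V) (X : Finset V) (S : Finset E) : Prop :=
  (inducedEdges src tgt S X).card + 1 = X.card ∧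
    ∀ u ∈ X, ∀ v ∈ X, reach src tgt (inducedEdges src tgt S X) u v

/-- `X` is saturated w.r.t. the (multi)graph with all edges `E`:
the induced subgraph has exactly `2|X| - 2` edges. -/
def Saturated (src tgt : E → V) [Fintype E] (X : Finset V) : Prop :=
  X.Nonempty ∧ (inducedEdges src tgt Finset.univ X).card + 2 = 2 * X.card

section aux
variable (src tgt : E → V)

lemma adjRel_mono {S S' : Finset E} (h : S ⊆ S') {u v : V}
    (hadj : adjRel src tgt S u v) : adjRel src tgt S' u v := by
  obtain ⟨e, he, hor⟩ := hadj; exact ⟨e, h he, hor⟩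

lemma reach_mono {S S' : Finset E} (h : S ⊆ S') {u v : V}
    (hr : reach src tgt S u v) : reach src tgt S' u v :=
  Relation.EqvGen.mono (fun a b hab => adjRel_mono src tgt h hab) _ _ hr

lemma reach_insert {S : Finset E} {e : E} {x y : V}
    (h : reach src tgt (insert e S) x y) :
    reach src tgt S x y ∨
      (reach src tgt S x (src e) ∧ reach src tgt S (tgt e) y) ∨
      (reach src tgt S x (tgt e) ∧ reach src tgt S (src e) y) := by
  have rs : ∀ {a b : V}, reach src tgt S a b → reach src tgt S b a :=
    fun h => Relation.EqvGen.symm _ _ h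
  have rt : ∀ {a b c : V}, reach src tgt S a b → reach src tgt S b c →
      reach src tgt S a c := fun h1 h2 => Relation.EqvGen.trans _ _ _ h1 h2
  induction h with
  | rel a b hab =>
      obtain ⟨e', he', hor⟩ := hab
      rcases Finset.mem_insert.mp he' with rfl | he'
      · rcases hor with ⟨h1, h2⟩ | ⟨h1, h2⟩
        · exact Or.inr (Or.inl ⟨h1 ▸ Relation.EqvGen.refl _, h2 ▸ Relation.EqvGen.refl _⟩)
        · exact Or.inr (Or.inr ⟨h2 ▸ Relation.EqvGen.refl _, h1 ▸ Relation.EqvGen.refl _⟩)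
      · exact Or.inl (Relation.EqvGen.rel _ _ ⟨e', he', hor⟩)
  | refl a => exact Or.inl (Relation.EqvGen.refl _)
  | symm a b _ ih =>
      rcases ih with h | ⟨h1, h2⟩ | ⟨h1, h2⟩
      · exact Or.inl (rs h)
      · exact Or.inr (Or.inr ⟨rs h2, rs h1⟩)
      · exact Or.inr (Or.inl ⟨rs h2, rs h1⟩)
  | trans a b c _ _ ih1 ih2 =>
      rcases ih1 with h | ⟨h1, h2⟩ | ⟨h1, h2⟩ <;>
        rcases ih2 with h' | ⟨h1', h2'⟩ | ⟨h1', h2'⟩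
      · exact Or.inl (rt h h')
      · exact Or.inr (Or.inl ⟨rt h h1', h2'⟩)
      · exact Or.inr (Or.inr ⟨rt h h1', h2'⟩)
      · exact Or.inr (Or.inl ⟨h1, rt h2 h'⟩)
      · exact Or.inl (rt h1 (rt (rs (rt h2 h1')) h2'))
      · exact Or.inl (rt h1 h2')
      · exact Or.inr (Or.inr ⟨h1, rt h2 h'⟩)
      · exact Or.inl (rt h1 h2')
      · exact Or.inl (rt h1 (rt (rs (rt h2 h1')) h2'))

noncomputable abbrev qmk (S : Finset E) (v : V) :
    Quotient (Relation.EqvGen.setoid (adjRel src tgt S)) :=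
  Quotient.mk (Relation.EqvGen.setoid (adjRel src tgt S)) v

lemma qmk_eq_iff {S : Finset E} {u v : V} :
    qmk src tgt S u = qmk src tgt S v ↔ reach src tgt S u v :=
  ⟨fun h => Quotient.exact h, fun h => Quotient.sound h⟩

lemma qmk_surjective (S : Finset E) : Function.Surjective (qmk src tgt S) :=
  Quotient.exists_rep

lemma reach_empty {u v : V} (h : reach src tgt (∅ : Finset E) u v) : u = v := by
  induction h with
  | rel a b hab => obtain ⟨e, he, _⟩ := hab; exact absurd he (Finset.notMem_empty e)
  | refl a => rfl
  | symm a b _ ih => exact ih.symm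
  | trans a b c _ _ ih1 ih2 => exact ih1.trans ih2

lemma nComp_empty [Fintype V] : nComp src tgt (∅ : Finset E) = Fintype.card V := by
  have hbij : Function.Bijective (qmk src tgt (∅ : Finset E)) :=
    ⟨fun u v h => reach_empty src tgt ((qmk_eq_iff src tgt).mp h),
     qmk_surjective src tgt ∅⟩
  rw [nComp, ← Nat.card_eq_of_bijective _ hbij, Nat.card_eq_fintype_card]

lemma nComp_mono [Fintype V] {S S' : Finset E} (h : S ⊆ S') :
    nComp src tgt S' ≤ nComp src tgt S := by
  have : Function.Surjective
      (Quotient.map' (id : V → V)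
        (fun a b hab => Relation.EqvGen.mono (fun x y hxy => adjRel_mono src tgt h hxy) _ _ hab) :
        Quotient (Relation.EqvGen.setoid (adjRel src tgt S)) →
        Quotient (Relation.EqvGen.setoid (adjRel src tgt S'))) := by
    intro q
    obtain ⟨v, rfl⟩ := qmk_surjective src tgt S' q
    exact ⟨qmk src tgt S v, rfl⟩
  exact Nat.card_le_card_of_surjective _ this

lemma nComp_insert [Fintype V] (e : E) (S : Finset E) :
    nComp src tgt S ≤ nComp src tgt (insert e S) + 1 := by
  set QS := Quotient (Relation.EqvGen.setoid (adjRel src tgt S))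
  set QE := Quotient (Relation.EqvGen.setoid (adjRel src tgt (insert e S)))
  let π : QS → QE := Quotient.map' (id : V → V)
    (fun a b hab => Relation.EqvGen.mono
      (fun x y hxy => adjRel_mono src tgt (Finset.subset_insert e S) hxy) _ _ hab)
  have hπ : ∀ v : V, π (qmk src tgt S v) = qmk src tgt (insert e S) v := fun v => rfl
  let g : QS → QE ⊕ Unit := fun x =>
    if x = qmk src tgt S (src e) then Sum.inr () else Sum.inl (π x)
  have hg : Function.Injective g := by
    intro x y hxy
    obtain ⟨a, rfl⟩ := qmk_surjective src tgt S x
    obtain ⟨b, rfl⟩ := qmk_surjective src tgt S y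
    simp only [g] at hxy
    split_ifs at hxy with h1 h2 h2
    case pos => exact h1.trans h2.symm
    case neg =>
      have hxy2 : qmk src tgt (insert e S) a = qmk src tgt (insert e S) b := by
        rw [← hπ a, ← hπ b]; exact Sum.inl.inj hxy
      have hxy' : reach src tgt (insert e S) a b := (qmk_eq_iff src tgt).mp hxy2
      rcases reach_insert src tgt hxy' with h | ⟨ha, hb⟩ | ⟨ha, hb⟩
      · exact (qmk_eq_iff src tgt).mpr h
      · exact absurd ((qmk_eq_iff src tgt).mpr ha) h1
      · exact absurd ((qmk_eq_iff src tgt).mpr (Relation.EqvGen.symm _ _ hb)) h2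
    all_goals exact absurd hxy (by simp)
  calc Nat.card QS ≤ Nat.card (QE ⊕ Unit) := Nat.card_le_card_of_injective g hg
    _ = Nat.card QE + 1 := by simp [Nat.card_sum]

lemma card_le_nComp_add [Fintype V] (S : Finset E) :
    Fintype.card V ≤ nComp src tgt S + S.card := by
  induction S using Finset.induction with
  | empty => simp [nComp_empty]
  | insert _ _ hx ih =>
      rename_i e S
      rw [Finset.card_insert_of_notMem hx]
      have := nComp_insert src tgt e S
      omega

lemma nComp_le_union [Fintype V] (S' : Finset E) (D : Finset E) :
    nComp src tgt S' ≤ nComp src tgt (S' ∪ D) + D.card := by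
  induction D using Finset.induction with
  | empty => simp
  | insert _ _ hx ih =>
      rename_i e D
      rw [Finset.card_insert_of_notMem hx, Finset.union_insert]
      have h5 : nComp src tgt (S' ∪ D) ≤ nComp src tgt (insert e (S' ∪ D)) + 1 :=
        nComp_insert src tgt e (S' ∪ D)
      omega

lemma nComp_add_card_mono [Fintype V] {S' S : Finset E} (h : S' ⊆ S) :
    nComp src tgt S' + S'.card ≤ nComp src tgt S + S.card := by
  have h1 := nComp_le_union src tgt S' (S \ S')
  rw [Finset.union_sdiff_of_subset h] at h1
  have h2 := Finset.card_sdiff_add_card_eq_card h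
  omega
end aux

lemma reach_induced_stay (src tgt : E → V) {S : Finset E} {X : Finset V} {x y : V}
    (h : reach src tgt (inducedEdges src tgt S X) x y) : x = y ∨ (x ∈ X ∧ y ∈ X) := by
  induction h with
  | rel a b hab =>
      obtain ⟨e, he, hor⟩ := hab
      obtain ⟨h1, h2⟩ := (Finset.mem_filter.mp he).2
      rcases hor with ⟨ha, hb⟩ | ⟨ha, hb⟩
      · exact Or.inr ⟨ha ▸ h1, hb ▸ h2⟩
      · exact Or.inr ⟨hb ▸ h2, ha ▸ h1⟩
  | refl a => exact Or.inl rfl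
  | symm a b _ ih =>
      rcases ih with rfl | ⟨h1, h2⟩
      · exact Or.inl rfl
      · exact Or.inr ⟨h2, h1⟩
  | trans a b c _ _ ih1 ih2 =>
      rcases ih1 with rfl | ⟨h1, h2⟩
      · exact ih2
      · rcases ih2 with rfl | ⟨h1', h2'⟩
        · exact Or.inr ⟨h1, h2⟩
        · exact Or.inr ⟨h1, h2'⟩

lemma card_split (X : Finset V) [Fintype V] :
    Nat.card {v : V // v ∉ X} + X.card = Fintype.card V := by
  rw [Nat.card_eq_fintype_card, Fintype.card_subtype_compl]
  have h1 : Fintype.card {v : V // v ∈ X} = X.card := Fintype.card_coe X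
  have h2 : X.card ≤ Fintype.card V := X.card_le_univ
  omega

lemma nComp_induced_lb1 [Fintype V] (src tgt : E → V) (S : Finset E) {X : Finset V}
    (hne : X.Nonempty) :
    Fintype.card V + 1 ≤ nComp src tgt (inducedEdges src tgt S X) + X.card := by
  obtain ⟨x₀, hx₀⟩ := hne
  set T := inducedEdges src tgt S X with hT
  let f : {v : V // v ∉ X} ⊕ Unit → Quotient (Relation.EqvGen.setoid (adjRel src tgt T)) :=
    fun z => match z with
      | Sum.inl w => qmk src tgt T w.1
      | Sum.inr _ => qmk src tgt T x₀
  have hf : Function.Injective f := by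
    rintro (⟨w, hw⟩ | ⟨⟩) (⟨w', hw'⟩ | ⟨⟩) h <;> simp only [f] at h
    · rcases reach_induced_stay src tgt ((qmk_eq_iff src tgt).mp h) with rfl | ⟨h1, _⟩
      · rfl
      · exact absurd h1 hw
    · rcases reach_induced_stay src tgt ((qmk_eq_iff src tgt).mp h) with rfl | ⟨h1, _⟩
      · exact absurd hx₀ hw
      · exact absurd h1 hw
    · rcases reach_induced_stay src tgt ((qmk_eq_iff src tgt).mp h) with rfl | ⟨_, h2⟩
      · exact absurd hx₀ hw'
      · exact absurd h2 hw'
    · rfl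
  have hcard := Nat.card_le_card_of_injective f hf
  rw [Nat.card_sum] at hcard
  have hsp := card_split X (V := V)
  simp only [Nat.card_unique] at hcard
  have : Nat.card (Quotient (Relation.EqvGen.setoid (adjRel src tgt T))) = nComp src tgt T := rfl
  omega

lemma nComp_induced_lb2 [Fintype V] (src tgt : E → V) (S : Finset E) {X : Finset V} {u v : V}
    (hu : u ∈ X) (hv : v ∈ X)
    (hnr : ¬ reach src tgt (inducedEdges src tgt S X) u v) :
    Fintype.card V + 2 ≤ nComp src tgt (inducedEdges src tgt S X) + X.card := by
  set T := inducedEdges src tgt S X with hT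
  let f : {v : V // v ∉ X} ⊕ Bool → Quotient (Relation.EqvGen.setoid (adjRel src tgt T)) :=
    fun z => match z with
      | Sum.inl w => qmk src tgt T w.1
      | Sum.inr false => qmk src tgt T u
      | Sum.inr true => qmk src tgt T v
  have hstay : ∀ {w y : V}, w ∉ X → y ∈ X → qmk src tgt T w ≠ qmk src tgt T y := by
    intro w y hw hy h
    rcases reach_induced_stay src tgt ((qmk_eq_iff src tgt).mp h) with rfl | ⟨h1, _⟩
    · exact hw hy
    · exact hw h1
  have huv : qmk src tgt T u ≠ qmk src tgt T v :=
    fun h => hnr ((qmk_eq_iff src tgt).mp h)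
  have hf : Function.Injective f := by
    rintro (⟨w, hw⟩ | b) (⟨w', hw'⟩ | b') h
    · simp only [f] at h
      rcases reach_induced_stay src tgt ((qmk_eq_iff src tgt).mp h) with rfl | ⟨h1, _⟩
      · rfl
      · exact absurd h1 hw
    · cases b' <;> simp only [f] at h
      · exact absurd h (hstay hw hu)
      · exact absurd h (hstay hw hv)
    · cases b <;> simp only [f] at h
      · exact absurd h.symm (hstay hw' hu)
      · exact absurd h.symm (hstay hw' hv)
    · cases b <;> cases b' <;> simp only [f] at h
      · rfl
      · exact absurd h huv
      · exact absurd h.symm huv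
      · rfl
  have hcard := Nat.card_le_card_of_injective f hf
  rw [Nat.card_sum] at hcard
  have hsp := card_split X (V := V)
  have hbool : Nat.card Bool = 2 := by simp [Nat.card_eq_fintype_card]
  have : Nat.card (Quotient (Relation.EqvGen.setoid (adjRel src tgt T))) = nComp src tgt T := rfl
  omega

/-- If the edge set of `G₀` is the disjoint union of a spanning
tree and a spanning 2-forest, and `X` is saturated (the induced subgraph has
exactly `2|X| - 2` edges), then for any pair `(A, B)` of complementary
edge-disjoint spanning 2-forest/spanning tree (in either order), both induced
subgraphs `A[X]` and `B[X]` are spanning trees on `X`. -/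
theorem stmt_2 [Fintype V] [Fintype E] (src tgt : E → V)
    (hconn : nComp src tgt (Finset.univ : Finset E) = 1)
    (hG : ∃ T F : Finset E, IsSpanningTree src tgt T ∧ IsSpanning2Forest src tgt F ∧
      Disjoint T F ∧ T ∪ F = Finset.univ)
    (X : Finset V)
    (hX : (inducedEdges src tgt Finset.univ X).card + 2 = 2 * X.card)
    (A B : Finset E)
    (hAB : (IsSpanning2Forest src tgt A ∧ IsSpanningTree src tgt B) ∨
           (IsSpanningTree src tgt A ∧ IsSpanning2Forest src tgt B))
    (hdisj : Disjoint A B) (hcover : A ∪ B = Finset.univ) :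
    IsTreeOn src tgt X A ∧ IsTreeOn src tgt X B := by
  have hXne : X.Nonempty := by
    rw [← Finset.card_pos]; omega
  have htA : nComp src tgt A + A.card = Fintype.card V := by
    rcases hAB with ⟨⟨h1, h2⟩, _⟩ | ⟨⟨h1, h2⟩, _⟩ <;> omega
  have htB : nComp src tgt B + B.card = Fintype.card V := by
    rcases hAB with ⟨_, ⟨h1, h2⟩⟩ | ⟨_, ⟨h1, h2⟩⟩ <;> omega
  set AX := inducedEdges src tgt A X with hAX
  set BX := inducedEdges src tgt B X with hBX
  have hsubA : AX ⊆ A := Finset.filter_subset _ _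
  have hsubB : BX ⊆ B := Finset.filter_subset _ _
  have tightA : nComp src tgt AX + AX.card = Fintype.card V := by
    have h1 := card_le_nComp_add src tgt AX
    have h2 := nComp_add_card_mono src tgt hsubA
    omega
  have tightB : nComp src tgt BX + BX.card = Fintype.card V := by
    have h1 := card_le_nComp_add src tgt BX
    have h2 := nComp_add_card_mono src tgt hsubB
    omega
  have hAle : AX.card + 1 ≤ X.card := by
    have := nComp_induced_lb1 src tgt A hXne
    rw [← hAX] at this
    omega
  have hBle : BX.card + 1 ≤ X.card := by
    have := nComp_induced_lb1 src tgt B hXne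
    rw [← hBX] at this
    omega
  have hunion : inducedEdges src tgt Finset.univ X = AX ∪ BX := by
    rw [hAX, hBX, inducedEdges, inducedEdges, inducedEdges, ← hcover, Finset.filter_union]
  have hdisj2 : Disjoint AX BX := Finset.disjoint_filter_filter hdisj
  have hcardsum : AX.card + BX.card = (inducedEdges src tgt Finset.univ X).card := by
    rw [hunion, Finset.card_union_of_disjoint hdisj2]
  have hAcard : AX.card + 1 = X.card := by omega
  have hBcard : BX.card + 1 = X.card := by omega
  refine ⟨⟨hAcard, ?_⟩, ⟨hBcard, ?_⟩⟩
  · intro u hu v hv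
    by_contra hnr
    have := nComp_induced_lb2 src tgt A hu hv hnr
    rw [← hAX] at this
    omega
  · intro u hu v hv
    by_contra hnr
    have := nComp_induced_lb2 src tgt B hu hv hnr
    rw [← hBX] at this
    omega
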